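/- arXiv:2008.00850 — 5 statements merged into one kernel-verified Lean document; each statement's English description precedes it below -/
import Mathlib

section
/- Let p be a prime and let X and Y be n×n matrices over ℚ_p. If ‖Y − X‖_p < |det(X)|_p / h_p(X)^n, then |det(Y)|_p = |det(X)|_p. -/
open Matrix

/-- The `p`-adic sup-norm of a matrix over `ℚ_[p]`: the maximum of the `p`-adic
absolute values of its entries. -/
noncomputable def pMatNorm {n p : ℕ} [Fact p.Prime]
    (A : Matrix (Fin n) (Fin n) ℚ_[p]) : ℝ :=
  ((Finset.univ.sup fun ij : Fin n × Fin n => ‖A ij.1 ij.2‖₊ : NNReal) : ℝ)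

/-- The `p`-adic inhomogeneous height `h_p(A) = max {‖A‖_p, 1}`. -/
noncomputable def pMatHeight {n p : ℕ} [Fact p.Prime]
    (A : Matrix (Fin n) (Fin n) ℚ_[p]) : ℝ :=
  max (pMatNorm A) 1

lemma pMatNorm_entry_le {n p : ℕ} [Fact p.Prime]
    (A : Matrix (Fin n) (Fin n) ℚ_[p]) (i j : Fin n) : ‖A i j‖ ≤ pMatNorm A := by
  have : (‖A i j‖₊ : NNReal) ≤ Finset.univ.sup fun ij : Fin n × Fin n => ‖A ij.1 ij.2‖₊ :=
    Finset.le_sup (f := fun ij : Fin n × Fin n => ‖A ij.1 ij.2‖₊) (Finset.mem_univ (i, j))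
  exact_mod_cast this

lemma pMatNorm_nonneg {n p : ℕ} [Fact p.Prime]
    (A : Matrix (Fin n) (Fin n) ℚ_[p]) : 0 ≤ pMatNorm A := NNReal.coe_nonneg _

lemma norm_perm_sign {p : ℕ} [Fact p.Prime] {m : Type*} [DecidableEq m] [Fintype m]
    (σ : Equiv.Perm m) : ‖((Equiv.Perm.sign σ : ℤ) : ℚ_[p])‖ = 1 := by
  rcases Int.units_eq_one_or (Equiv.Perm.sign σ) with h | h <;> simp [h]

/-- The norm of a `p`-adic determinant is bounded by `M^n` when all entries are. -/
lemma norm_det_le_pow {n p : ℕ} [Fact p.Prime]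
    (X : Matrix (Fin n) (Fin n) ℚ_[p]) (M : ℝ) (hM0 : 0 ≤ M)
    (hX : ∀ i j, ‖X i j‖ ≤ M) : ‖X.det‖ ≤ M ^ n := by
  rw [Matrix.det_apply']
  refine IsUltrametricDist.norm_sum_le_of_forall_le_of_nonneg (pow_nonneg hM0 n) ?_
  intro σ _
  rw [norm_mul, norm_perm_sign, one_mul, norm_prod]
  calc ∏ i : Fin n, ‖X (σ i) i‖ ≤ ∏ _i : Fin n, M :=
        Finset.prod_le_prod (fun i _ => norm_nonneg _) (fun i _ => hX _ _)
    _ = M ^ n := by simp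

/-- Ultrametric bound on difference of products. -/
lemma norm_prod_sub_prod_le {p : ℕ} [Fact p.Prime] {ι : Type*} [DecidableEq ι] (s : Finset ι)
    (f g : ι → ℚ_[p]) (M ε : ℝ) (hM : 1 ≤ M) (hε : 0 ≤ ε)
    (hf : ∀ i ∈ s, ‖f i‖ ≤ M) (hg : ∀ i ∈ s, ‖g i‖ ≤ M)
    (hfg : ∀ i ∈ s, ‖f i - g i‖ ≤ ε) :
    ‖∏ i ∈ s, f i - ∏ i ∈ s, g i‖ ≤ ε * M ^ s.card := by
  induction s using Finset.induction_on with
  | empty => simpa using hε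
  | @insert a s ha ih =>
    have hf' : ∀ i ∈ s, ‖f i‖ ≤ M := fun i hi => hf i (Finset.mem_insert_of_mem hi)
    have hg' : ∀ i ∈ s, ‖g i‖ ≤ M := fun i hi => hg i (Finset.mem_insert_of_mem hi)
    have hfg' : ∀ i ∈ s, ‖f i - g i‖ ≤ ε := fun i hi => hfg i (Finset.mem_insert_of_mem hi)
    have key : (∏ i ∈ insert a s, f i) - ∏ i ∈ insert a s, g i
        = f a * ((∏ i ∈ s, f i) - ∏ i ∈ s, g i) + (f a - g a) * ∏ i ∈ s, g i := by
      rw [Finset.prod_insert ha, Finset.prod_insert ha]; ring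
    rw [key, Finset.card_insert_of_notMem ha]
    have hM0 : (0:ℝ) ≤ M := le_trans zero_le_one hM
    refine (Padic.nonarchimedean _ _).trans (max_le ?_ ?_)
    · rw [norm_mul]
      calc ‖f a‖ * ‖(∏ i ∈ s, f i) - ∏ i ∈ s, g i‖
          ≤ M * (ε * M ^ s.card) :=
            mul_le_mul (hf a (Finset.mem_insert_self a s))
              (ih hf' hg' hfg') (norm_nonneg _) hM0
        _ = ε * M ^ (s.card + 1) := by ring
    · rw [norm_mul]
      have hprod : ‖∏ i ∈ s, g i‖ ≤ M ^ s.card := by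
        rw [norm_prod]
        calc ∏ i ∈ s, ‖g i‖ ≤ ∏ _i ∈ s, M :=
              Finset.prod_le_prod (fun i _ => norm_nonneg _) hg'
          _ = M ^ s.card := by simp
      calc ‖f a - g a‖ * ‖∏ i ∈ s, g i‖
          ≤ ε * M ^ s.card :=
            mul_le_mul (hfg a (Finset.mem_insert_self a s)) hprod (norm_nonneg _) hε
        _ ≤ ε * M ^ (s.card + 1) :=
            mul_le_mul_of_nonneg_left (pow_le_pow_right₀ hM (Nat.le_succ _)) hε

theorem det_abs_eq_of_close {n p : ℕ} [Fact p.Prime]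
    (X Y : Matrix (Fin n) (Fin n) ℚ_[p])
    (h : pMatNorm (Y - X) < ‖X.det‖ / pMatHeight X ^ n) :
    ‖Y.det‖ = ‖X.det‖ := by
  set M := pMatHeight X with hMdef
  set ε := pMatNorm (Y - X) with hεdef
  have hM1 : 1 ≤ M := le_max_right _ _
  have hM0 : (0:ℝ) < M := lt_of_lt_of_le zero_lt_one hM1
  have hMn0 : (0:ℝ) < M ^ n := pow_pos hM0 n
  have hε0 : 0 ≤ ε := pMatNorm_nonneg _
  have hεM : ε * M ^ n < ‖X.det‖ := by
    have := mul_lt_mul_of_pos_right h hMn0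
    rwa [div_mul_cancel₀ _ (ne_of_gt hMn0)] at this
  have hXle : ∀ i j, ‖X i j‖ ≤ M := fun i j =>
    (pMatNorm_entry_le X i j).trans (le_max_left _ _)
  have hdetX : ‖X.det‖ ≤ M ^ n := norm_det_le_pow X M (le_of_lt hM0) hXle
  have hε1 : ε < 1 := by
    by_contra hc
    push_neg at hc
    have : M ^ n ≤ ε * M ^ n := le_mul_of_one_le_left (le_of_lt hMn0) hc
    linarith
  have hεle : ∀ i j, ‖(Y - X) i j‖ ≤ ε := fun i j => pMatNorm_entry_le (Y - X) i j
  have hYle : ∀ i j, ‖Y i j‖ ≤ M := by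
    intro i j
    have : Y i j = X i j + (Y - X) i j := by simp
    rw [this]
    refine (Padic.nonarchimedean _ _).trans (max_le (hXle i j) ?_)
    exact (hεle i j).trans (le_of_lt (lt_of_lt_of_le hε1 hM1))
  -- bound the norm of det Y - det X
  have hdiff : ‖Y.det - X.det‖ ≤ ε * M ^ n := by
    rw [Matrix.det_apply', Matrix.det_apply', ← Finset.sum_sub_distrib]
    refine IsUltrametricDist.norm_sum_le_of_forall_le_of_nonneg
      (mul_nonneg hε0 (le_of_lt hMn0)) ?_
    intro σ _
    rw [← mul_sub, norm_mul, norm_perm_sign, one_mul]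
    have := norm_prod_sub_prod_le (Finset.univ : Finset (Fin n))
      (fun i => Y (σ i) i) (fun i => X (σ i) i) M ε hM1 hε0
      (fun i _ => hYle _ _) (fun i _ => hXle _ _)
      (fun i _ => by simpa [Matrix.sub_apply] using hεle (σ i) i)
    simpa using this
  have hlt : ‖Y.det - X.det‖ < ‖X.det‖ := lt_of_le_of_lt hdiff hεM
  have hne : ‖Y.det - X.det‖ ≠ ‖X.det‖ := ne_of_lt hlt
  have : ‖(Y.det - X.det) + X.det‖ = max ‖Y.det - X.det‖ ‖X.det‖ :=
    IsUltrametricDist.norm_add_eq_max_of_norm_ne_norm hne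
  rw [sub_add_cancel, this, max_eq_right (le_of_lt hlt)] at *
end

section
/- Let p be a prime and let A be an invertible n×n matrix over ℚ_p. Then there exists at least one matrix E ∈ ℰ_n (an n×n diagonal matrix with each diagonal entry equal to 1 or −1) such that |det(A − E)|_p ≥ |2^n · det(A)|_p. -/
open Matrix

/-- An `n × n` matrix is a *sign diagonal* matrix (an element of `ℰ_n`) if it is
diagonal with every diagonal entry equal to `1` or `-1`. -/
def IsSignDiag {n : ℕ} {R : Type*} [Ring R] (E : Matrix (Fin n) (Fin n) R) : Prop :=
  ∃ s : Fin n → R, (∀ i, s i = 1 ∨ s i = -1) ∧ E = Matrix.diagonal s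

section Aux

variable {n p : ℕ} [Fact p.Prime]

private noncomputable def sgnv {K : Type*} [Field K] (σ : Fin n → Bool) : Fin n → K :=
  fun i => if σ i then 1 else -1

private lemma sum_prod_sgn {K : Type*} [Field K] (s : Finset (Fin n)) (hs : s.Nonempty) :
    ∑ σ : Fin n → Bool, ∏ i ∈ s, (-(sgnv σ i) : K) = 0 := by
  obtain ⟨i₀, hi₀⟩ := hs
  refine Finset.sum_ninvolution (fun σ => Function.update σ i₀ (!σ i₀)) ?_ ?_
    (fun _ => Finset.mem_univ _) ?_
  · intro σ
    rw [← Finset.mul_prod_erase s _ hi₀, ← Finset.mul_prod_erase s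
      (fun i => (-(sgnv (Function.update σ i₀ (!σ i₀)) i) : K)) hi₀]
    have h1 : ∀ j ∈ s.erase i₀, (-(sgnv (Function.update σ i₀ (!σ i₀)) j) : K) = -(sgnv σ j) := by
      intro j hj
      have : j ≠ i₀ := Finset.ne_of_mem_erase hj
      simp [sgnv, Function.update_of_ne this]
    rw [Finset.prod_congr rfl h1]
    have h2 : (-(sgnv (Function.update σ i₀ (!σ i₀)) i₀) : K) = -(-(sgnv σ i₀)) := by
      simp only [sgnv, Function.update_self]
      cases σ i₀ <;> simp
    rw [h2]
    ring
  · intro σ _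
    intro hcontra
    have := congrFun hcontra i₀
    simp at this
  · intro σ
    funext j
    by_cases hj : j = i₀
    · subst hj; simp
    · simp [Function.update_of_ne hj]

private lemma key_identity (A : Matrix (Fin n) (Fin n) ℚ_[p]) :
    ∑ σ : Fin n → Bool, (A - Matrix.diagonal (sgnv σ)).det = 2 ^ n * A.det := by
  classical
  set f := (Matrix.detRowAlternating : (Fin n → ℚ_[p]) [⋀^Fin n]→ₗ[ℚ_[p]] ℚ_[p])
  set e : Fin n → (Fin n → ℚ_[p]) := fun i => Pi.single i (1 : ℚ_[p]) with he
  have hdet : ∀ σ : Fin n → Bool, (A - Matrix.diagonal (sgnv σ)).det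
      = ∑ s : Finset (Fin n),
        (∏ i ∈ s, (-(sgnv σ i) : ℚ_[p])) *
          f (s.piecewise e (fun i => A i)) := by
    intro σ
    have hrows : (fun i => ((A - Matrix.diagonal (sgnv σ) : Matrix (Fin n) (Fin n) ℚ_[p])) i)
        = (fun i => (-(sgnv σ i) : ℚ_[p]) • e i) + (fun i => A i) := by
      funext i j
      by_cases h : i = j
      · subst h
        simp only [Matrix.sub_apply, Matrix.diagonal_apply_eq, Pi.add_apply, Pi.smul_apply,
          he, Pi.single_eq_same, smul_eq_mul]
        ring
      · simp only [Matrix.sub_apply, Matrix.diagonal_apply_ne _ h, Pi.add_apply, Pi.smul_apply,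
          he, Pi.single_eq_of_ne' h, smul_eq_mul]
        ring
    have h1 : (A - Matrix.diagonal (sgnv σ)).det
        = f.toMultilinearMap ((fun i => (-(sgnv σ i) : ℚ_[p]) • e i)
            + (fun i => A i)) := by
      rw [← hrows]; rfl
    rw [h1, MultilinearMap.map_add_univ]
    refine Finset.sum_congr rfl fun s _ => ?_
    have hpw : s.piecewise (fun i => (-(sgnv σ i) : ℚ_[p]) • e i) (fun i => A i)
        = s.piecewise (fun i => (-(sgnv σ i) : ℚ_[p]) •
            (s.piecewise e (fun i => A i)) i)
          (s.piecewise e (fun i => A i)) := by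
      funext j
      by_cases hj : j ∈ s <;> simp [Finset.piecewise, hj]
    rw [hpw, f.toMultilinearMap.map_piecewise_smul]
    simp [smul_eq_mul]
  simp_rw [hdet]
  rw [Finset.sum_comm]
  rw [Finset.sum_eq_single (∅ : Finset (Fin n))]
  · have h0 : f ((∅ : Finset (Fin n)).piecewise e (fun i => A i)) = A.det := by
      congr 1
    rw [h0, ← Finset.sum_mul]
    simp only [Finset.prod_empty, Finset.sum_const, Finset.card_univ, Fintype.card_fun,
      Fintype.card_bool, Fintype.card_fin, nsmul_eq_mul, mul_one]
    push_cast
    ring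
  · intro s _ hs
    rw [← Finset.sum_mul, sum_prod_sgn s (Finset.nonempty_of_ne_empty hs), zero_mul]
  · intro h
    exact absurd (Finset.mem_univ _) h

end Aux

theorem exists_sign_diag_det_sub_ge {n p : ℕ} [Fact p.Prime]
    (A : Matrix (Fin n) (Fin n) ℚ_[p]) (hA : IsUnit A.det) :
    ∃ E : Matrix (Fin n) (Fin n) ℚ_[p], IsSignDiag E ∧
      ‖(2 ^ n * A.det : ℚ_[p])‖ ≤ ‖(A - E).det‖ := by
  obtain ⟨σ, -, hσ⟩ := IsUltrametricDist.exists_norm_finset_sum_le_of_nonempty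
    (Finset.univ_nonempty (α := Fin n → Bool))
    (fun σ => (A - Matrix.diagonal (sgnv σ)).det)
  refine ⟨Matrix.diagonal (sgnv σ), ⟨sgnv σ, fun i => ?_, rfl⟩, ?_⟩
  · by_cases h : σ i <;> simp [sgnv, h]
  · rw [← key_identity A]
    exact hσ
end

section
/- Let R be a commutative ring, let A be an n×n matrix over R, and let D be an n×n diagonal matrix over R. Then the sum over all Λ ∈ ℰ_n of det(A − Λ·D) equals 2^n · det(A). In particular, ∑_{E ∈ ℰ_n} det(A − E) = 2^n · det(A). -/
open Matrix

lemma aux_sum_det {n : ℕ} {R : Type*} [CommRing R] (A : Matrix (Fin n) (Fin n) R)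
    (c : Fin n → R) :
    ∑ s : Fin n → ℤˣ, (A - Matrix.diagonal (fun i => ((s i : ℤ) : R) * c i)).det
      = 2 ^ n * A.det := by
  have key := (Matrix.detRowAlternating :
      (Fin n → R) [⋀^Fin n]→ₗ[R] R).toMultilinearMap.map_sum
      (g := fun i (j : ℤˣ) => (A i - ((j : ℤ) : R) • (Pi.single i (c i) : Fin n → R)))
  have huniv : (Finset.univ : Finset ℤˣ) = {1, -1} := by decide
  have hrow : ∀ i : Fin n, (∑ j : ℤˣ, (A i - ((j : ℤ) : R) • (Pi.single i (c i) : Fin n → R)))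
      = (2 : R) • A i := by
    intro i
    rw [huniv]
    simp [two_smul, sub_eq_add_neg, add_comm, add_assoc, add_left_comm]
  have hmat : ∀ s : Fin n → ℤˣ,
      (fun i => A i - ((s i : ℤ) : R) • (Pi.single i (c i) : Fin n → R))
        = (A - Matrix.diagonal (fun i => ((s i : ℤ) : R) * c i)) := by
    intro s
    funext i j
    simp [Matrix.sub_apply, Matrix.diagonal_apply, Pi.single_apply, eq_comm]
  rw [funext hrow] at key
  rw [MultilinearMap.map_smul_univ (c := fun _ : Fin n => (2 : R)) (m := fun i => A i)] at key
  simp only [hmat] at key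
  have : ((Matrix.detRowAlternating :
      (Fin n → R) [⋀^Fin n]→ₗ[R] R).toMultilinearMap A) = A.det := rfl
  rw [this] at key
  simpa [Matrix.det, Finset.prod_const, smul_eq_mul] using key.symm

theorem sum_det_sub_sign_diag {n : ℕ} {R : Type*} [CommRing R]
    (A D : Matrix (Fin n) (Fin n) R) (hD : D.IsDiag) :
    (∑ s : Fin n → ℤˣ,
        (A - Matrix.diagonal (fun i => ((s i : ℤ) : R)) * D).det = 2 ^ n * A.det) ∧
    (∑ s : Fin n → ℤˣ,
        (A - Matrix.diagonal (fun i => ((s i : ℤ) : R))).det = 2 ^ n * A.det) := by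
  constructor
  · have h : ∀ s : Fin n → ℤˣ,
        Matrix.diagonal (fun i => ((s i : ℤ) : R)) * D
          = Matrix.diagonal (fun i => ((s i : ℤ) : R) * D i i) := by
      intro s
      ext i j
      rcases eq_or_ne i j with rfl | hij
      · simp [Matrix.diagonal_mul, Matrix.diagonal_apply]
      · simp [Matrix.diagonal_mul, Matrix.diagonal_apply, hij, hD hij]
    simp only [h]
    exact aux_sum_det A _
  · have := aux_sum_det A (fun _ => (1 : R))
    simpa using this
end

section
/- Let K be a field, let F, U, U_p, τ be n×n matrices over K with det(U + F) ≠ 0 and det(U_p + F) ≠ 0, and set τ̂ := (U + F)⁻¹(U − F)·τ and τ_p := (U_p + F)⁻¹(U_p − F)·τ. Then τ̂ − τ_p = (U + F)⁻¹ · (U − U_p) · (τ − τ_p). -/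
open Matrix

theorem cayley_difference_identity {n : ℕ} {K : Type*} [Field K]
    (F U Up τ : Matrix (Fin n) (Fin n) K)
    (h1 : (U + F).det ≠ 0) (h2 : (Up + F).det ≠ 0) :
    let τhat := (U + F)⁻¹ * (U - F) * τ
    let τp := (Up + F)⁻¹ * (Up - F) * τ
    τhat - τp = (U + F)⁻¹ * (U - Up) * (τ - τp) := by
  intro τhat τp
  have hUp : (Up + F) * τp = (Up - F) * τ := by
    simp only [τp, ← Matrix.mul_assoc,
      Matrix.mul_nonsing_inv_cancel_left _ _ h2.isUnit]
  have hτp : τp = (U + F)⁻¹ * ((U + F) * τp) := by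
    rw [← Matrix.mul_assoc, Matrix.nonsing_inv_mul _ h1.isUnit, Matrix.one_mul]
  calc τhat - τp = (U + F)⁻¹ * ((U - F) * τ - (U + F) * τp) := by
        rw [Matrix.mul_sub]; simp only [τhat, Matrix.mul_assoc]; rw [← hτp]
    _ = (U + F)⁻¹ * ((U - Up) * (τ - τp)) := by
        congr 1
        have key : (U - F) * τ - (U + F) * τp - (U - Up) * (τ - τp)
            = (Up - F) * τ - (Up + F) * τp := by noncomm_ring
        rw [← sub_eq_zero, key, hUp, sub_self]
    _ = (U + F)⁻¹ * (U - Up) * (τ - τp) := by rw [Matrix.mul_assoc]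
end

section
/- Let P be a finite set of primes, let d be a positive integer, and let ε be a real number with 0 < ε ≤ 1. Suppose that for every p ∈ P an n×n skew-symmetric matrix U_p over ℚ_p is given such that every entry of d·U_p lies in ℤ_p. Then there exists an n×n skew-symmetric matrix U over ℚ such that d·U has integer entries, every entry of U has (archimedean) absolute value at most C/d where C = ∏_{p ∈ P} p^{⌈log_p(d/ε)⌉ + 1}, and ‖U − U_p‖_p < ε for every p ∈ P. -/
open Matrix

instance (p : Nat.Primes) : Fact (Nat.Prime (p : ℕ)) := ⟨p.2⟩

/-- Lower bound for the `p`-adic norm of a positive natural number. -/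
lemma one_div_le_norm_natCast {p : ℕ} [Fact p.Prime] {d : ℕ} (hd : 0 < d) :
    (1 : ℝ) / d ≤ ‖(d : ℚ_[p])‖ := by
  have hdne : (d : ℚ_[p]) ≠ 0 := by
    exact_mod_cast Nat.cast_ne_zero.mpr hd.ne'
  rw [Padic.norm_eq_zpow_neg_valuation hdne, Padic.valuation_natCast]
  have hdvd : p ^ padicValNat p d ∣ d := pow_padicValNat_dvd
  have hle : (p : ℝ) ^ (padicValNat p d : ℤ) ≤ (d : ℝ) := by
    rw [zpow_natCast]
    exact_mod_cast Nat.le_of_dvd hd hdvd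
  have hpow_pos : (0 : ℝ) < (p : ℝ) ^ (padicValNat p d : ℤ) := by
    have : (0 : ℝ) < (p : ℝ) := by exact_mod_cast (Fact.out : p.Prime).pos
    positivity
  rw [_root_.zpow_neg, ← one_div]
  exact one_div_le_one_div_of_le hpow_pos hle

theorem simultaneous_skew_symmetric_approx {n : ℕ}
    (P : Finset Nat.Primes) (d : ℕ) (hd : 0 < d)
    (ε : ℝ) (hε0 : 0 < ε) (hε1 : ε ≤ 1)
    (Up : (p : Nat.Primes) → p ∈ P → Matrix (Fin n) (Fin n) ℚ_[(p : ℕ)])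
    (hskew : ∀ (p : Nat.Primes) (hp : p ∈ P), (Up p hp)ᵀ = -Up p hp)
    (hint : ∀ (p : Nat.Primes) (hp : p ∈ P) (i j : Fin n),
      ‖(d : ℚ_[(p : ℕ)]) * Up p hp i j‖ ≤ 1) :
    ∃ U : Matrix (Fin n) (Fin n) ℚ, Uᵀ = -U ∧
      (∀ i j, ∃ m : ℤ, (d : ℚ) * U i j = (m : ℚ)) ∧
      (∀ i j, |(U i j : ℝ)| ≤
        (∏ p ∈ P, ((p : ℕ) : ℝ) ^ (⌈Real.logb (p : ℕ) (d / ε)⌉ + 1)) / d) ∧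
      ∀ (p : Nat.Primes) (hp : p ∈ P),
        pMatNorm (U.map (fun x : ℚ => (x : ℚ_[(p : ℕ)])) - Up p hp) < ε := by
  classical
  -- exponents
  set k : Nat.Primes → ℕ := fun p => (⌈Real.logb (p : ℕ) (d / ε)⌉ + 1).toNat with hkdef
  have hdε1 : (1 : ℝ) ≤ (d : ℝ) / ε := by
    rw [le_div_iff₀ hε0, one_mul]
    exact hε1.trans (by exact_mod_cast hd)
  have hlogb_nonneg : ∀ p : Nat.Primes, 0 ≤ Real.logb ((p : ℕ) : ℝ) ((d : ℝ) / ε) := by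
    intro p
    exact Real.logb_nonneg (by exact_mod_cast p.2.one_lt) hdε1
  have hk_cast : ∀ p : Nat.Primes, ((k p : ℕ) : ℤ) = ⌈Real.logb (p : ℕ) (d / ε)⌉ + 1 := by
    intro p
    refine Int.toNat_of_nonneg ?_
    have := Int.ceil_nonneg (hlogb_nonneg p)
    omega
  set N : ℕ := ∏ p ∈ P, (p : ℕ) ^ k p with hNdef
  have hNpos : 0 < N := by
    refine Finset.prod_pos fun p _ => pow_pos p.2.pos _
  -- The constant equals N
  have hC : (∏ p ∈ P, ((p : ℕ) : ℝ) ^ (⌈Real.logb (p : ℕ) (d / ε)⌉ + 1)) = (N : ℝ) := by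
    rw [hNdef]
    push_cast
    refine Finset.prod_congr rfl fun p _ => ?_
    rw [← hk_cast p, zpow_natCast]
  -- the key numeric inequality : p ^ (-(k p)) * d < ε
  have hnum : ∀ p : Nat.Primes, ((p : ℕ) : ℝ) ^ (-(k p : ℤ)) * d < ε := by
    intro p
    have hp1 : (1 : ℝ) < ((p : ℕ) : ℝ) := by exact_mod_cast p.2.one_lt
    have hdpos : (0 : ℝ) < (d : ℝ) / ε := lt_of_lt_of_le one_pos hdε1
    have hlt : Real.logb ((p : ℕ) : ℝ) ((d : ℝ) / ε) < (k p : ℝ) := by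
      have h1 : ((k p : ℕ) : ℝ) = (⌈Real.logb (p : ℕ) (d / ε)⌉ : ℝ) + 1 := by
        exact_mod_cast congrArg (fun z : ℤ => (z : ℝ)) (hk_cast p)
      rw [h1]
      have := Int.le_ceil (Real.logb (p : ℕ) (d / ε))
      linarith
    have h2 : (d : ℝ) / ε < ((p : ℕ) : ℝ) ^ (k p : ℝ) :=
      (Real.logb_lt_iff_lt_rpow hp1 hdpos).mp hlt
    rw [Real.rpow_natCast] at h2
    have hppos : (0 : ℝ) < ((p : ℕ) : ℝ) ^ (k p : ℕ) := by positivity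
    rw [div_lt_iff₀ hε0] at h2
    have hz : ((p : ℕ) : ℝ) ^ (-(k p : ℤ)) = (((p : ℕ) : ℝ) ^ (k p : ℕ))⁻¹ := by
      rw [_root_.zpow_neg, zpow_natCast]
    rw [hz, inv_mul_eq_div, div_lt_iff₀ hppos]
    nlinarith
  -- per-entry approximation
  have key : ∀ i j : Fin n, ∃ m : ℕ, m < N ∧ ∀ (p : Nat.Primes) (hp : p ∈ P),
      ‖(m : ℚ_[(p : ℕ)]) - (d : ℚ_[(p : ℕ)]) * Up p hp i j‖ ≤ ((p : ℕ) : ℝ) ^ (-(k p : ℤ)) := by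
    intro i j
    -- residues via `appr`
    set r : Nat.Primes → ℕ := fun p =>
      if hp : p ∈ P then
        PadicInt.appr (⟨(d : ℚ_[(p : ℕ)]) * Up p hp i j, hint p hp i j⟩ : ℤ_[(p : ℕ)]) (k p)
      else 0 with hrdef
    have hr : ∀ (p : Nat.Primes) (hp : p ∈ P),
        ‖((r p : ℚ_[(p : ℕ)])) - (d : ℚ_[(p : ℕ)]) * Up p hp i j‖
          ≤ ((p : ℕ) : ℝ) ^ (-(k p : ℤ)) := by
      intro p hp
      set x : ℤ_[(p : ℕ)] := ⟨(d : ℚ_[(p : ℕ)]) * Up p hp i j, hint p hp i j⟩ with hxdef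
      have hspec := PadicInt.appr_spec (k p) x
      have hnorm : ‖x - (x.appr (k p) : ℤ_[(p : ℕ)])‖ ≤ ((p : ℕ) : ℝ) ^ (-(k p : ℤ)) :=
        ((x - (x.appr (k p) : ℤ_[(p : ℕ)])).norm_le_pow_iff_mem_span_pow (k p)).mpr hspec
      have hcoe : ((x - (x.appr (k p) : ℤ_[(p : ℕ)]) : ℤ_[(p : ℕ)]) : ℚ_[(p : ℕ)])
          = -(((r p : ℚ_[(p : ℕ)])) - (d : ℚ_[(p : ℕ)]) * Up p hp i j) := by
        push_cast [hrdef, dif_pos hp, hxdef]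
        rw [neg_sub]; rfl
      rw [PadicInt.norm_def, hcoe, norm_neg] at hnorm
      exact hnorm
    -- CRT
    have hs : ∀ p ∈ P, (p : ℕ) ^ k p ≠ 0 := fun p _ => pow_ne_zero _ p.2.pos.ne'
    have hpp : Set.Pairwise (P : Set Nat.Primes) (Function.onFun Nat.Coprime fun p : Nat.Primes => (p : ℕ) ^ k p) := by
      intro p _ q _ hpq
      exact Nat.Coprime.pow _ _ ((Nat.coprime_primes p.2 q.2).mpr
        (fun h => hpq (Subtype.ext h)))
    obtain ⟨m0, hm0⟩ := Nat.chineseRemainderOfFinset r (fun p : Nat.Primes => (p : ℕ) ^ k p) P hs hpp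
    refine ⟨m0 % N, Nat.mod_lt _ hNpos, ?_⟩
    intro p hp
    have hmod : m0 % N ≡ r p [MOD (p : ℕ) ^ k p] := by
      have h1 : m0 % N ≡ m0 [MOD N] := Nat.mod_modEq m0 N
      have h2 : (p : ℕ) ^ k p ∣ N := Finset.dvd_prod_of_mem _ hp
      exact (Nat.ModEq.of_dvd h2 h1).trans (hm0 p hp)
    -- from congruence to p-adic distance
    have hdvd : ((p : ℕ) ^ k p : ℤ) ∣ ((m0 % N : ℕ) : ℤ) - (r p : ℤ) := by
      have := (Nat.modEq_iff_dvd (n := (p : ℕ) ^ k p)).mp hmod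
      rw [Nat.cast_pow] at this
      exact dvd_sub_comm.mp this
    have hnear : ‖((((m0 % N : ℕ) : ℤ) - (r p : ℤ) : ℤ) : ℚ_[(p : ℕ)])‖
        ≤ ((p : ℕ) : ℝ) ^ (-(k p) : ℤ) := by
      rw [Padic.norm_int_le_pow_iff_dvd]
      exact_mod_cast hdvd
    have hcast : ∀ a b : ℕ, (((a : ℤ) - (b : ℤ) : ℤ) : ℚ_[(p : ℕ)])
        = (a : ℚ_[(p : ℕ)]) - (b : ℚ_[(p : ℕ)]) := by intro a b; push_cast; ring
    rw [hcast (m0 % N) (r p)] at hnear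
    calc ‖((m0 % N : ℕ) : ℚ_[(p : ℕ)]) - (d : ℚ_[(p : ℕ)]) * Up p hp i j‖
        = ‖(((m0 % N : ℕ) : ℚ_[(p : ℕ)]) - (r p : ℚ_[(p : ℕ)]))
            + ((r p : ℚ_[(p : ℕ)]) - (d : ℚ_[(p : ℕ)]) * Up p hp i j)‖ := by ring_nf
      _ ≤ max ‖((m0 % N : ℕ) : ℚ_[(p : ℕ)]) - (r p : ℚ_[(p : ℕ)])‖
            ‖(r p : ℚ_[(p : ℕ)]) - (d : ℚ_[(p : ℕ)]) * Up p hp i j‖ :=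
          Padic.nonarchimedean _ _
      _ ≤ ((p : ℕ) : ℝ) ^ (-(k p : ℤ)) := max_le hnear (hr p hp)
  choose M hMlt hMnorm using key
  -- define U
  set U : Matrix (Fin n) (Fin n) ℚ := Matrix.of fun i j =>
    if i < j then (M i j : ℚ) / d else if j < i then -((M j i : ℚ) / d) else 0 with hUdef
  have hdQ : (d : ℚ) ≠ 0 := by exact_mod_cast hd.ne'
  refine ⟨U, ?_, ?_, ?_, ?_⟩
  · -- skew-symmetric
    ext i j
    rcases lt_trichotomy i j with h | h | h
    · simp [hUdef, h, asymm h]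
    · simp [hUdef, h, lt_irrefl]
    · simp [hUdef, h, asymm h]
  · -- integrality
    intro i j
    rcases lt_trichotomy i j with h | h | h
    · refine ⟨(M i j : ℤ), ?_⟩
      rw [hUdef]
      simp only [Matrix.of_apply, if_pos h]
      field_simp
      push_cast
      exact_mod_cast rfl
    · refine ⟨0, ?_⟩
      subst h
      rw [hUdef]
      simp
    · refine ⟨-(M j i : ℤ), ?_⟩
      rw [hUdef]
      simp only [Matrix.of_apply, if_neg (asymm h), if_pos h]
      field_simp
      push_cast
      try ring
  · -- archimedean bound
    intro i j
    rw [hC]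
    have hdR : (0 : ℝ) < (d : ℝ) := by exact_mod_cast hd
    have habs : ∀ a b : Fin n, |((M a b : ℚ) : ℝ) / d| ≤ (N : ℝ) / d := by
      intro a b
      rw [abs_div, abs_of_nonneg (by positivity : (0:ℝ) ≤ ((M a b : ℚ) : ℝ)),
        abs_of_nonneg hdR.le]
      gcongr
      exact_mod_cast (hMlt a b).le
    rcases lt_trichotomy i j with h | h | h
    · have hthis : (U i j : ℝ) = ((M i j : ℚ) : ℝ) / d := by
        rw [hUdef]; simp only [Matrix.of_apply, if_pos h]; push_cast; ring
      rw [hthis]; exact habs i j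
    · have hthis : (U i j : ℝ) = 0 := by
        subst h; rw [hUdef]; simp
      rw [hthis, abs_zero]; positivity
    · have hthis : (U i j : ℝ) = -(((M j i : ℚ) : ℝ) / d) := by
        rw [hUdef]; simp only [Matrix.of_apply, if_neg (asymm h), if_pos h]; push_cast; ring
      rw [hthis, abs_neg]; exact habs j i
  · -- p-adic approximation
    intro p hp
    have hdp : ((d : ℚ_[(p : ℕ)])) ≠ 0 := by exact_mod_cast Nat.cast_ne_zero.mpr hd.ne'
    have hdR : (0 : ℝ) < (d : ℝ) := by exact_mod_cast hd
    -- core bound for any pair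
    have core : ∀ a b : Fin n,
        ‖(M a b : ℚ_[(p : ℕ)]) / d - Up p hp a b‖ < ε := by
      intro a b
      have h1 : (M a b : ℚ_[(p : ℕ)]) / d - Up p hp a b
          = ((M a b : ℚ_[(p : ℕ)]) - (d : ℚ_[(p : ℕ)]) * Up p hp a b) / d := by
        field_simp
      rw [h1, norm_div]
      have hlow : (1 : ℝ) / d ≤ ‖(d : ℚ_[(p : ℕ)])‖ := one_div_le_norm_natCast hd
      have hdnorm_pos : (0 : ℝ) < ‖(d : ℚ_[(p : ℕ)])‖ := norm_pos_iff.mpr hdp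
      have hnum' := hnum p
      have hMb := hMnorm a b p hp
      calc ‖(M a b : ℚ_[(p : ℕ)]) - (d : ℚ_[(p : ℕ)]) * Up p hp a b‖ / ‖(d : ℚ_[(p : ℕ)])‖
          ≤ ((p : ℕ) : ℝ) ^ (-(k p : ℤ)) / ((1 : ℝ) / d) := by
            gcongr
        _ = ((p : ℕ) : ℝ) ^ (-(k p : ℤ)) * d := by
            field_simp
        _ < ε := hnum'
    have hUpskew : ∀ a b : Fin n, Up p hp b a = -Up p hp a b := by
      intro a b
      have := congrFun (congrFun (hskew p hp) a) b
      simpa [Matrix.transpose_apply, Matrix.neg_apply] using this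
    have hUpdiag : ∀ a : Fin n, Up p hp a a = 0 := by
      intro a
      have h := hUpskew a a
      have h2 : (2 : ℚ_[(p : ℕ)]) * Up p hp a a = 0 := by rw [two_mul]; linear_combination h
      have h2ne : (2 : ℚ_[(p : ℕ)]) ≠ 0 := two_ne_zero
      exact (mul_eq_zero.mp h2).resolve_left h2ne
    have hentry : ∀ i j : Fin n,
        ‖((U i j : ℚ) : ℚ_[(p : ℕ)]) - Up p hp i j‖ < ε := by
      intro i j
      rcases lt_trichotomy i j with h | h | h
      · have hU : ((U i j : ℚ) : ℚ_[(p : ℕ)]) = (M i j : ℚ_[(p : ℕ)]) / d := by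
          rw [hUdef]; simp only [Matrix.of_apply, if_pos h]; push_cast; try ring
        rw [hU]; exact core i j
      · have hU : ((U i j : ℚ) : ℚ_[(p : ℕ)]) = 0 := by
          subst h; rw [hUdef]; simp
        rw [hU, h, hUpdiag j]
        simpa using hε0
      · have hU : ((U i j : ℚ) : ℚ_[(p : ℕ)]) = -((M j i : ℚ_[(p : ℕ)]) / d) := by
          rw [hUdef]; simp only [Matrix.of_apply, if_neg (asymm h), if_pos h]; push_cast; try ring
        have : ((U i j : ℚ) : ℚ_[(p : ℕ)]) - Up p hp i j
            = -((M j i : ℚ_[(p : ℕ)]) / d - Up p hp j i) := by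
          rw [hU, hUpskew j i]; ring
        rw [this, norm_neg]
        exact core j i
    -- conclude about the sup
    set εn : NNReal := ⟨ε, hε0.le⟩ with hεndef
    have hbot : (⊥ : NNReal) < εn := by
      rw [bot_eq_zero]
      exact_mod_cast hε0
    have hsup : (Finset.univ.sup fun ij : Fin n × Fin n =>
        ‖(U.map (fun x : ℚ => (x : ℚ_[(p : ℕ)])) - Up p hp) ij.1 ij.2‖₊) < εn := by
      rw [Finset.sup_lt_iff hbot]
      intro ij _
      have := hentry ij.1 ij.2
      have hval : (U.map (fun x : ℚ => (x : ℚ_[(p : ℕ)])) - Up p hp) ij.1 ij.2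
          = ((U ij.1 ij.2 : ℚ) : ℚ_[(p : ℕ)]) - Up p hp ij.1 ij.2 := by
        simp [Matrix.sub_apply, Matrix.map_apply]
      rw [hval]
      rw [← NNReal.coe_lt_coe]
      exact this
    unfold pMatNorm
    exact_mod_cast hsup
end
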